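/- arXiv:1605.01275 — 3 statements merged into one kernel-verified Lean document; each statement's English description precedes it below -/
import Mathlib

section
/- Let X be a Binomial(n,p) random variable. Then for every integer k with 1 ≤ k ≤ n, the conditional probability P(X ≥ k | X ≥ 1) is at most P(X ≥ k−1). -/
/-- Key lemma: q^n * P(X ≥ m) ≤ P(X = m) for Binomial(n,p), q = 1-p. -/
lemma binom_tail_key (n m : ℕ) (p : ℝ) (hp : 0 ≤ p) (hp1 : p ≤ 1) (hmn : m ≤ n) :
    (1 - p) ^ n * ∑ j ∈ Finset.Icc m n, (n.choose j : ℝ) * p ^ j * (1 - p) ^ (n - j) ≤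
      (n.choose m : ℝ) * p ^ m * (1 - p) ^ (n - m) := by
  set q : ℝ := 1 - p with hq
  have hq0 : 0 ≤ q := by simp [hq]; linarith
  have hq1 : q ≤ 1 := by simp [hq]; linarith
  rw [show Finset.Icc m n = Finset.Ico m (n + 1) by rw [Finset.Ico_add_one_right_eq_Icc],
    Finset.sum_Ico_eq_sum_range, Finset.mul_sum]
  calc ∑ i ∈ Finset.range (n + 1 - m),
        q ^ n * ((n.choose (m + i) : ℝ) * p ^ (m + i) * q ^ (n - (m + i)))
      ≤ ∑ i ∈ Finset.range (n + 1 - m),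
        ((n.choose m : ℝ) * p ^ m * q ^ (n - m)) *
          (((n - m).choose i : ℝ) * p ^ i * q ^ (n - m - i)) := by
        apply Finset.sum_le_sum
        intro i hi
        have hi' : m + i ≤ n := by
          simp only [Finset.mem_range] at hi; omega
        have hc : (n.choose (m + i) : ℝ) ≤ (n.choose m : ℝ) * ((n - m).choose i : ℝ) := by
          have h1 : n.choose (m + i) * (m + i).choose m = n.choose m * (n - m).choose i := by
            have := Nat.choose_mul (n := n) (Nat.le_add_right m i)
            simpa using this
          have h2 : n.choose (m + i) ≤ n.choose m * (n - m).choose i := by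
            calc n.choose (m + i) ≤ n.choose (m + i) * (m + i).choose m :=
                  Nat.le_mul_of_pos_right _ (Nat.choose_pos (Nat.le_add_right m i))
              _ = n.choose m * (n - m).choose i := h1
          exact_mod_cast h2
        have hqpow : q ^ n * q ^ (n - (m + i)) ≤ q ^ (n - m) * q ^ (n - m - i) := by
          have e1 : n = m + (n - m) := by omega
          have e2 : n - (m + i) = n - m - i := by omega
          rw [e2]
          have : q ^ n ≤ q ^ (n - m) := by
            apply pow_le_pow_of_le_one hq0 hq1; omega
          exact mul_le_mul_of_nonneg_right this (pow_nonneg hq0 _)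
        have hpe : p ^ (m + i) = p ^ m * p ^ i := pow_add p m i
        have hnn : (0:ℝ) ≤ (n.choose (m + i) : ℝ) := by positivity
        calc q ^ n * ((n.choose (m + i) : ℝ) * p ^ (m + i) * q ^ (n - (m + i)))
            = (n.choose (m + i) : ℝ) * (p ^ m * p ^ i) * (q ^ n * q ^ (n - (m + i))) := by
              rw [hpe]; ring
          _ ≤ ((n.choose m : ℝ) * ((n - m).choose i : ℝ)) * (p ^ m * p ^ i) *
                (q ^ (n - m) * q ^ (n - m - i)) := by
              apply mul_le_mul
              · exact mul_le_mul_of_nonneg_right hc (by positivity)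
              · exact hqpow
              · positivity
              · positivity
          _ = ((n.choose m : ℝ) * p ^ m * q ^ (n - m)) *
                (((n - m).choose i : ℝ) * p ^ i * q ^ (n - m - i)) := by ring
    _ = ((n.choose m : ℝ) * p ^ m * q ^ (n - m)) *
          ∑ i ∈ Finset.range (n + 1 - m),
            (((n - m).choose i : ℝ) * p ^ i * q ^ (n - m - i)) := by
        rw [Finset.mul_sum]
    _ ≤ (n.choose m : ℝ) * p ^ m * q ^ (n - m) := by
        have hsum : ∑ i ∈ Finset.range (n + 1 - m),
            (((n - m).choose i : ℝ) * p ^ i * q ^ (n - m - i)) = 1 := by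
          have hrw : n + 1 - m = (n - m) + 1 := by omega
          rw [hrw]
          have := add_pow p q (n - m)
          have hpq : p + q = 1 := by simp [hq]
          rw [hpq, one_pow] at this
          have h2 : ∑ i ∈ Finset.range (n - m + 1),
              (((n - m).choose i : ℝ) * p ^ i * q ^ (n - m - i)) =
              ∑ i ∈ Finset.range (n - m + 1),
              (p ^ i * q ^ (n - m - i) * ((n - m).choose i : ℝ)) :=
            Finset.sum_congr rfl fun i _ => by ring
          rw [h2, ← this]
        rw [hsum, mul_one]

/-- For a Binomial(n,p) random variable X and 1 ≤ k ≤ n,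
P(X ≥ k | X ≥ 1) ≤ P(X ≥ k−1). -/
theorem binomial_cond_tail_le (n : ℕ) (p : ℝ) (hp : 0 < p) (hp1 : p ≤ 1)
    (k : ℕ) (hk1 : 1 ≤ k) (hkn : k ≤ n) :
    (∑ j ∈ Finset.Icc k n, (n.choose j : ℝ) * p ^ j * (1 - p) ^ (n - j)) /
      (∑ j ∈ Finset.Icc 1 n, (n.choose j : ℝ) * p ^ j * (1 - p) ^ (n - j)) ≤
    ∑ j ∈ Finset.Icc (k - 1) n, (n.choose j : ℝ) * p ^ j * (1 - p) ^ (n - j) := by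
  set q : ℝ := 1 - p with hq
  have hq0 : 0 ≤ q := by simp [hq]; linarith
  set f : ℕ → ℝ := fun j => (n.choose j : ℝ) * p ^ j * q ^ (n - j) with hf
  have hfnn : ∀ j, 0 ≤ f j := by intro j; exact mul_nonneg (mul_nonneg (by positivity) (by positivity)) (pow_nonneg hq0 _)
  have hn1 : 1 ≤ n := le_trans hk1 hkn
  -- S1 > 0
  have hS1pos : 0 < ∑ j ∈ Finset.Icc 1 n, f j := by
    apply Finset.sum_pos' (fun j _ => hfnn j)
    refine ⟨n, Finset.mem_Icc.mpr ⟨hn1, le_refl n⟩, ?_⟩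
    simp only [hf, Nat.choose_self, Nat.sub_self, pow_zero, Nat.cast_one, one_mul, mul_one]
    positivity
  rw [div_le_iff₀ hS1pos]
  -- S(1) = 1 - q^n
  have hS0 : ∑ j ∈ Finset.Icc 0 n, f j = 1 := by
    rw [show Finset.Icc 0 n = Finset.range (n + 1) by
      ext x; simp [Nat.lt_succ_iff]]
    have := add_pow p q n
    have hpq : p + q = 1 := by simp [hq]
    rw [hpq, one_pow] at this
    have h2 : ∑ j ∈ Finset.range (n + 1), f j =
        ∑ j ∈ Finset.range (n + 1), (p ^ j * q ^ (n - j) * (n.choose j : ℝ)) :=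
      Finset.sum_congr rfl fun i _ => by simp only [hf]; ring
    rw [h2, ← this]
  have hsplit0 : Finset.Icc 0 n = insert 0 (Finset.Icc 1 n) := by
    ext x; simp [Nat.lt_succ_iff]; omega
  have hS1 : ∑ j ∈ Finset.Icc 1 n, f j = 1 - q ^ n := by
    have h0 : (0:ℕ) ∉ Finset.Icc 1 n := by simp
    have := hS0
    rw [hsplit0, Finset.sum_insert h0] at this
    have hf0 : f 0 = q ^ n := by simp [hf]
    linarith
  -- S(k-1) = f(k-1) + S(k)
  have hsplitk : Finset.Icc (k - 1) n = insert (k - 1) (Finset.Icc k n) := by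
    ext x; simp [Finset.mem_Icc]; omega
  have hkm : (k - 1) ∉ Finset.Icc k n := by simp [Finset.mem_Icc]; omega
  have hSk : ∑ j ∈ Finset.Icc (k - 1) n, f j = f (k - 1) + ∑ j ∈ Finset.Icc k n, f j := by
    rw [hsplitk, Finset.sum_insert hkm]
  -- key lemma with m = k - 1
  have hkey : q ^ n * ∑ j ∈ Finset.Icc (k - 1) n, f j ≤ f (k - 1) := by
    have := binom_tail_key n (k - 1) p (le_of_lt hp) hp1 (by omega)
    simpa [hf, hq] using this
  rw [hS1, hSk]
  have hSknn : 0 ≤ ∑ j ∈ Finset.Icc k n, f j := Finset.sum_nonneg fun j _ => hfnn j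
  nlinarith [hkey, hSk]
end

section
/- The total variation distance between Poisson(λ) and 1 + Poisson(λ) (the law of a Poisson(λ) variable shifted by 1) is at most e^{−λ} λ^{λ}/λ! when λ is a positive integer; in particular, for λ = 4n² with n ≥ 1 an integer, this distance is at most 1/n. -/
private noncomputable def pp (m : ℕ) (k : ℕ) : ℝ :=
  Real.exp (-(m : ℝ)) * (m : ℝ) ^ k / k.factorial

private noncomputable def qq (m : ℕ) : ℕ → ℝ
  | 0 => 0
  | (k + 1) => pp m k

private lemma pp_nonneg (m k : ℕ) : 0 ≤ pp m k := by
  unfold pp; positivity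

private lemma qq_nonneg (m k : ℕ) : 0 ≤ qq m k := by
  cases k with
  | zero => simp [qq]
  | succ k => exact pp_nonneg m k

private lemma summable_pp (m : ℕ) : Summable (pp m) := by
  have := (Real.summable_pow_div_factorial (m : ℝ)).mul_left (Real.exp (-(m : ℝ)))
  refine this.congr fun k => ?_
  unfold pp; ring

private lemma summable_qq (m : ℕ) : Summable (qq m) := by
  have h : Summable (fun k => qq m (k + 1)) := summable_pp m
  exact (summable_nat_add_iff 1).mp h

private lemma pp_succ (m k : ℕ) : pp m (k + 1) = pp m k * ((m : ℝ) / (k + 1)) := by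
  unfold pp
  rw [Nat.factorial_succ, pow_succ]
  push_cast
  have h1 : (k.factorial : ℝ) ≠ 0 := Nat.cast_ne_zero.mpr k.factorial_ne_zero
  have h2 : ((k : ℝ) + 1) ≠ 0 := by positivity
  field_simp

private lemma qq_le_pp (m : ℕ) (hm : 0 < m) {j : ℕ} (hj : j ≤ m) : qq m j ≤ pp m j := by
  cases j with
  | zero => simpa [qq] using pp_nonneg m 0
  | succ k =>
    show pp m k ≤ pp m (k + 1)
    rw [pp_succ]
    have h : (1 : ℝ) ≤ (m : ℝ) / (k + 1) := by
      rw [le_div_iff₀ (by positivity)]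
      have : (k : ℝ) + 1 ≤ (m : ℝ) := by exact_mod_cast hj
      linarith
    nlinarith [pp_nonneg m k]

private lemma pp_le_qq (m : ℕ) {j : ℕ} (hj : m < j) : pp m j ≤ qq m j := by
  cases j with
  | zero => omega
  | succ k =>
    show pp m (k + 1) ≤ pp m k
    rw [pp_succ]
    have h : (m : ℝ) / (k + 1) ≤ 1 := by
      rw [div_le_one (by positivity)]
      have : (m : ℝ) ≤ (k : ℝ) + 1 := by exact_mod_cast hj.le
      linarith
    nlinarith [pp_nonneg m k]

private lemma tsum_qq_eq (m : ℕ) : ∑' k, qq m k = ∑' k, pp m k := by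
  rw [Summable.tsum_eq_zero_add (summable_qq m)]
  simp [qq]

private lemma tsum_h_eq (m : ℕ) :
    ∑' j, (if j ≤ m then pp m j - qq m j else 0) = pp m m := by
  rw [tsum_eq_sum (s := Finset.range (m + 1))
    (by intro b hb; simp only [Finset.mem_range, not_lt] at hb
        rw [if_neg]; omega)]
  have h : ∀ j ∈ Finset.range (m + 1),
      (if j ≤ m then pp m j - qq m j else 0) = pp m j - qq m j := by
    intro j hj; rw [if_pos]; simp only [Finset.mem_range] at hj; omega
  rw [Finset.sum_congr rfl h, Finset.sum_sub_distrib,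
    Finset.sum_range_succ (pp m), Finset.sum_range_succ' (qq m)]
  simp [qq]

private lemma summable_h (m : ℕ) :
    Summable (fun j => if j ≤ m then pp m j - qq m j else 0) := by
  apply summable_of_ne_finset_zero (s := Finset.range (m + 1))
  intro b hb
  simp only [Finset.mem_range, not_lt] at hb
  rw [if_neg]; omega

open Classical in
private lemma main_bound (m : ℕ) (hm : 0 < m) (A : Set ℕ) :
    |(∑' k : ℕ, if k ∈ A then Real.exp (-(m : ℝ)) * (m : ℝ) ^ k / k.factorial else 0) -
      (∑' k : ℕ, if k + 1 ∈ A then Real.exp (-(m : ℝ)) * (m : ℝ) ^ k / k.factorial else 0)|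
      ≤ Real.exp (-(m : ℝ)) * (m : ℝ) ^ m / m.factorial := by
  have hsf : Summable (fun k => if k ∈ A then pp m k else 0) := by
    apply Summable.of_nonneg_of_le (fun k => by split <;> simp [pp_nonneg])
      (fun k => by split <;> simp [pp_nonneg]) (summable_pp m)
  have hsg : Summable (fun k => if k ∈ A then qq m k else 0) := by
    apply Summable.of_nonneg_of_le (fun k => by split <;> simp [qq_nonneg])
      (fun k => by split <;> simp [qq_nonneg]) (summable_qq m)
  have hshift : (∑' k : ℕ, if k + 1 ∈ A then pp m k else 0)
      = ∑' k : ℕ, if k ∈ A then qq m k else 0 := by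
    rw [Summable.tsum_eq_zero_add hsg]
    simp [qq]
  have key : ∀ B : Set ℕ,
      (∑' k : ℕ, if k ∈ B then pp m k else 0) - (∑' k : ℕ, if k ∈ B then qq m k else 0)
        ≤ pp m m := by
    intro B
    have hsf' : Summable (fun k => if k ∈ B then pp m k else 0) := by
      apply Summable.of_nonneg_of_le (fun k => by split <;> simp [pp_nonneg])
        (fun k => by split <;> simp [pp_nonneg]) (summable_pp m)
    have hsg' : Summable (fun k => if k ∈ B then qq m k else 0) := by
      apply Summable.of_nonneg_of_le (fun k => by split <;> simp [qq_nonneg])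
        (fun k => by split <;> simp [qq_nonneg]) (summable_qq m)
    rw [← Summable.tsum_sub hsf' hsg']
    calc ∑' k, ((if k ∈ B then pp m k else 0) - (if k ∈ B then qq m k else 0))
        ≤ ∑' j, (if j ≤ m then pp m j - qq m j else 0) := by
          apply Summable.tsum_le_tsum _ (hsf'.sub hsg') (summable_h m)
          intro j
          by_cases hj : j ≤ m
          · rw [if_pos hj]
            by_cases hjB : j ∈ B
            · simp [hjB]
            · simp only [hjB, if_false, sub_zero, sub_self]
              linarith [qq_le_pp m hm hj]
          · rw [if_neg hj]
            by_cases hjB : j ∈ B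
            · simp only [hjB, if_true]
              linarith [pp_le_qq m (by omega : m < j)]
            · simp [hjB]
      _ = pp m m := tsum_h_eq m
  have e1 := key A
  have e3 : ∑' k, (pp m k - qq m k) = 0 := by
    rw [Summable.tsum_sub (summable_pp m) (summable_qq m), tsum_qq_eq m, sub_self]
  have hnn : ∀ j, 0 ≤ (if j ≤ m then pp m j - qq m j else 0) := by
    intro j
    by_cases hj : j ≤ m
    · rw [if_pos hj]; linarith [qq_le_pp m hm hj]
    · rw [if_neg hj]
  have e2' : (∑' k : ℕ, if k ∈ A then qq m k else 0)
      - (∑' k : ℕ, if k ∈ A then pp m k else 0) ≤ pp m m := by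
    rw [← Summable.tsum_sub hsg hsf]
    calc ∑' k, ((if k ∈ A then qq m k else 0) - (if k ∈ A then pp m k else 0))
        ≤ ∑' j, ((if j ≤ m then pp m j - qq m j else 0) - (pp m j - qq m j)) := by
          apply Summable.tsum_le_tsum _ (hsg.sub hsf)
            ((summable_h m).sub ((summable_pp m).sub (summable_qq m)))
          intro j
          by_cases hj : j ≤ m
          · rw [if_pos hj]
            by_cases hjA : j ∈ A
            · simp only [hjA, if_true]; linarith [qq_le_pp m hm hj]
            · simp only [hjA, if_false, sub_zero, sub_self, sub_sub_cancel]
              linarith [qq_le_pp m hm hj]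
          · rw [if_neg hj]
            by_cases hjA : j ∈ A
            · simp only [hjA, if_true, zero_sub]; linarith
            · simp only [hjA, if_false, sub_zero, zero_sub, neg_sub]
              linarith [pp_le_qq m (by omega : m < j)]
      _ = pp m m := by
          rw [Summable.tsum_sub (summable_h m) ((summable_pp m).sub (summable_qq m)), tsum_h_eq m, e3,
            sub_zero]
  show |(∑' k : ℕ, if k ∈ A then pp m k else 0) -
      (∑' k : ℕ, if k + 1 ∈ A then pp m k else 0)| ≤ pp m m
  rw [hshift, abs_le]
  constructor <;> linarith

open Real in
private lemma stirling_bound (m : ℕ) (hm : 0 < m) :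
    Real.exp (-(m : ℝ)) * (m : ℝ) ^ m / m.factorial ≤ 1 / Real.sqrt m := by
  have hπ : √π ≤ Stirling.stirlingSeq m := by
    have htend : Filter.Tendsto (Stirling.stirlingSeq ∘ Nat.succ) Filter.atTop (nhds (√π)) :=
      Stirling.tendsto_stirlingSeq_sqrt_pi.comp (Filter.tendsto_add_atTop_nat 1)
    obtain ⟨k, rfl⟩ := Nat.exists_eq_add_of_lt hm
    have := Stirling.stirlingSeq'_antitone.le_of_tendsto htend k
    simpa [Nat.succ_eq_add_one, Nat.add_comm] using this
  have hdef : Stirling.stirlingSeq m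
      = (m.factorial : ℝ) / (Real.sqrt (2 * m) * ((m : ℝ) / Real.exp 1) ^ m) := rfl
  have hm' : (0 : ℝ) < m := by exact_mod_cast hm
  have hden : (0 : ℝ) < Real.sqrt (2 * m) * ((m : ℝ) / Real.exp 1) ^ m := by positivity
  have hfact : √π * (Real.sqrt (2 * m) * ((m : ℝ) / Real.exp 1) ^ m) ≤ (m.factorial : ℝ) := by
    rw [hdef] at hπ
    calc √π * (Real.sqrt (2 * m) * ((m : ℝ) / Real.exp 1) ^ m)
        ≤ ((m.factorial : ℝ) / (Real.sqrt (2 * m) * ((m : ℝ) / Real.exp 1) ^ m))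
          * (Real.sqrt (2 * m) * ((m : ℝ) / Real.exp 1) ^ m) :=
          mul_le_mul_of_nonneg_right hπ hden.le
      _ = (m.factorial : ℝ) := by field_simp
  have hkey : ((m : ℝ) / Real.exp 1) ^ m = (m : ℝ) ^ m * Real.exp (-(m : ℝ)) := by
    rw [div_pow, ← Real.exp_nat_mul, mul_one, Real.exp_neg]
    simp [div_eq_mul_inv]
  rw [hkey] at hfact
  have hsq : (1 : ℝ) ≤ √π * Real.sqrt 2 := by
    rw [← Real.sqrt_mul Real.pi_pos.le]
    rw [show (1:ℝ) = Real.sqrt 1 by simp]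
    apply Real.sqrt_le_sqrt
    nlinarith [Real.pi_gt_three]
  have hsm : Real.sqrt (2 * (m:ℝ)) = Real.sqrt 2 * Real.sqrt m :=
    Real.sqrt_mul (by norm_num) _
  have hsqm : (0:ℝ) < Real.sqrt m := Real.sqrt_pos.mpr hm'
  have hfact2 : Real.sqrt m * ((m : ℝ) ^ m * Real.exp (-(m : ℝ))) ≤ (m.factorial : ℝ) := by
    calc Real.sqrt m * ((m : ℝ) ^ m * Real.exp (-(m : ℝ)))
        = 1 * (Real.sqrt m * ((m : ℝ) ^ m * Real.exp (-(m : ℝ)))) := by ring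
      _ ≤ (√π * Real.sqrt 2) * (Real.sqrt m * ((m : ℝ) ^ m * Real.exp (-(m : ℝ)))) := by
          apply mul_le_mul_of_nonneg_right hsq; positivity
      _ = √π * (Real.sqrt (2 * (m:ℝ)) * ((m : ℝ) ^ m * Real.exp (-(m : ℝ)))) := by
          rw [hsm]; ring
      _ ≤ (m.factorial : ℝ) := hfact
  have hfpos : (0 : ℝ) < m.factorial := by exact_mod_cast m.factorial_pos
  rw [div_le_div_iff₀ hfpos hsqm]
  calc Real.exp (-(m : ℝ)) * (m : ℝ) ^ m * Real.sqrt m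
      = Real.sqrt m * ((m : ℝ) ^ m * Real.exp (-(m : ℝ))) := by ring
    _ ≤ (m.factorial : ℝ) := hfact2
    _ = 1 * (m.factorial : ℝ) := by ring

open Classical in

/-- The total variation distance between Poisson(λ) and 1 + Poisson(λ) is at most
e^{−λ} λ^λ/λ! when λ = m is a positive integer; in particular for λ = 4n² (n ≥ 1) it is
at most 1/n.  Here μ(A) = Σ_{k∈A} e^{−m} m^k/k! and ν(A) = Σ_{k+1∈A} e^{−m} m^k/k!. -/
theorem poisson_shift_tv_bound :
    (∀ m : ℕ, 0 < m → ∀ A : Set ℕ,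
      |(∑' k : ℕ, if k ∈ A then Real.exp (-(m : ℝ)) * (m : ℝ) ^ k / k.factorial else 0) -
        (∑' k : ℕ, if k + 1 ∈ A then Real.exp (-(m : ℝ)) * (m : ℝ) ^ k / k.factorial else 0)|
        ≤ Real.exp (-(m : ℝ)) * (m : ℝ) ^ m / m.factorial) ∧
    (∀ n : ℕ, 1 ≤ n → ∀ A : Set ℕ,
      |(∑' k : ℕ, if k ∈ A then
          Real.exp (-(4 * n ^ 2 : ℝ)) * (4 * n ^ 2 : ℝ) ^ k / k.factorial else 0) -
        (∑' k : ℕ, if k + 1 ∈ A then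
          Real.exp (-(4 * n ^ 2 : ℝ)) * (4 * n ^ 2 : ℝ) ^ k / k.factorial else 0)|
        ≤ 1 / n) := by
  constructor
  · exact main_bound
  · intro n hn A
    have hn' : (0 : ℝ) < n := by exact_mod_cast hn
    set m : ℕ := 4 * n ^ 2 with hm_def
    have hm : 0 < m := by positivity
    have hcast : ((m : ℕ) : ℝ) = (4 * n ^ 2 : ℝ) := by push_cast [hm_def]; ring
    have h1 := main_bound m hm A
    rw [hcast] at h1
    have h2 := stirling_bound m hm
    rw [hcast] at h2
    refine h1.trans (h2.trans ?_)
    have hs : Real.sqrt (4 * (n:ℝ) ^ 2) = 2 * n := by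
      rw [show (4 * (n:ℝ)^2) = (2 * n)^2 by ring, Real.sqrt_sq (by positivity)]
    rw [hs]
    rw [div_le_div_iff₀ (by positivity) hn']
    nlinarith
end

section
/- Let l : (0,∞) → (0,∞) be continuous, non-increasing, bounded (l(0) := lim_{r→0} l(r) < ∞), with ∫₀^∞ r^{d−1} l(r) dr < ∞, and let η be a unit-intensity Poisson process on ℝ^d. Then the random field Ψ(y) = Σ_{x∈η} l(|x−y|) is almost surely continuous on ℝ^d. -/
open MeasureTheory
open scoped ENNReal

/-- A Poisson point process on ℝ^d with intensity measure `μ`, realized as a random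
(integer-valued) measure `η` on a probability space `(Ω, P)`: for each measurable set `A`
of finite intensity, `η(A)` is Poisson distributed with parameter `μ(A)`, and the counts
of finitely many pairwise disjoint measurable sets are independent. -/
structure IsPoissonPP {d : ℕ} {Ω : Type*} [MeasurableSpace Ω] (P : Measure Ω)
    (μ : Measure (EuclideanSpace ℝ (Fin d)))
    (η : Ω → Measure (EuclideanSpace ℝ (Fin d))) : Prop where
  measurable_count : ∀ A : Set (EuclideanSpace ℝ (Fin d)), MeasurableSet A →
    Measurable fun ω => η ω A
  integer_valued : ∀ ω, ∀ A : Set (EuclideanSpace ℝ (Fin d)),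
    η ω A = ⊤ ∨ ∃ n : ℕ, η ω A = n
  poisson_count : ∀ A : Set (EuclideanSpace ℝ (Fin d)), MeasurableSet A → μ A ≠ ⊤ →
    ∀ n : ℕ, P {ω | η ω A = n} =
      ENNReal.ofReal (Real.exp (-(μ A).toReal) * (μ A).toReal ^ n / n.factorial)
  indep_count : ∀ (k : ℕ) (A : Fin k → Set (EuclideanSpace ℝ (Fin d))),
    (∀ i, MeasurableSet (A i)) → Pairwise (Function.onFun Disjoint A) →
    ∀ n : Fin k → ℕ, P (⋂ i, {ω | η ω (A i) = n i}) = ∏ i, P {ω | η ω (A i) = n i}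

section FieldAux

open scoped NNReal

variable {d : ℕ} {Ω : Type*} [MeasurableSpace Ω] {P : Measure Ω} [IsProbabilityMeasure P]
  {η : Ω → Measure (EuclideanSpace ℝ (Fin d))}

set_option maxHeartbeats 1000000 in
lemma poisson_exp_aux {X : Ω → ℝ≥0∞} (hX : Measurable X)
    (hiv : ∀ ω, X ω = ⊤ ∨ ∃ n : ℕ, X ω = n)
    {lam : ℝ≥0}
    (hpmf : ∀ n : ℕ, P {ω | X ω = n} =
      ENNReal.ofReal (Real.exp (-(lam:ℝ)) * (lam:ℝ) ^ n / n.factorial)) :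
    ∫⁻ ω, X ω ∂P = (lam : ℝ≥0∞) := by
  classical
  have hpmf' : ∀ n : ℕ, P {ω | X ω = n} =
      ENNReal.ofReal (ProbabilityTheory.poissonPMFReal lam n) := by
    intro n; rw [hpmf n]; rfl
  have hmeasn : ∀ n : ℕ, MeasurableSet {ω | X ω = n} :=
    fun n => hX (measurableSet_singleton _)
  have hdisjn : Pairwise (Function.onFun Disjoint fun n : ℕ => {ω | X ω = n}) := by
    intro n m hnm
    refine Set.disjoint_left.2 fun ω h1 h2 => hnm ?_
    have : ((n : ℝ≥0∞)) = m := by rw [← h1, ← h2]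
    exact Nat.cast_injective this
  have hsumR : Summable (fun n => ProbabilityTheory.poissonPMFReal lam n) :=
    (ProbabilityTheory.poissonPMFRealSum lam).summable
  have hone : ∑' n : ℕ, ENNReal.ofReal (ProbabilityTheory.poissonPMFReal lam n) = 1 := by
    rw [← ENNReal.ofReal_tsum_of_nonneg (fun n => ProbabilityTheory.poissonPMFReal_nonneg) hsumR,
      show ∑' n : ℕ, ProbabilityTheory.poissonPMFReal lam n = 1 from
        (ProbabilityTheory.poissonPMFRealSum lam).tsum_eq]
    simp
  have hU : P (⋃ n : ℕ, {ω | X ω = n}) = 1 := by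
    rw [measure_iUnion hdisjn hmeasn]
    simp_rw [hpmf']; exact hone
  have htop : P {ω | X ω = ⊤} = 0 := by
    have hdisj : Disjoint {ω | X ω = ⊤} (⋃ n : ℕ, {ω | X ω = n}) := by
      refine Set.disjoint_left.2 fun ω h1 h2 => ?_
      simp only [Set.mem_iUnion, Set.mem_setOf_eq] at h1 h2
      obtain ⟨n, hn⟩ := h2
      rw [h1] at hn
      exact (ENNReal.top_ne_natCast n) hn
    have huniv : {ω | X ω = ⊤} ∪ (⋃ n : ℕ, {ω | X ω = n}) = Set.univ := by
      ext ω; simp only [Set.mem_union, Set.mem_iUnion, Set.mem_setOf_eq, Set.mem_univ, iff_true]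
      rcases hiv ω with h | ⟨n, hn⟩
      · exact Or.inl h
      · exact Or.inr ⟨n, hn⟩
    have h1 : P {ω | X ω = ⊤} + P (⋃ n : ℕ, {ω | X ω = n}) = 1 := by
      rw [← measure_union hdisj (MeasurableSet.iUnion hmeasn), huniv, measure_univ]
    rw [hU] at h1
    have hx : 1 + P {ω | X ω = ⊤} = 1 + 0 := by rw [add_comm] at h1; simpa using h1
    exact (ENNReal.add_right_inj (by simp)).1 hx
  have hae : X =ᵐ[P] fun ω => ∑' n : ℕ,
      ({ω' | X ω' = n}.indicator (fun _ => (n : ℝ≥0∞)) ω) := by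
    have : {ω | X ω ≠ ∑' n : ℕ, ({ω' | X ω' = n}.indicator (fun _ => (n : ℝ≥0∞)) ω)}
        ⊆ {ω | X ω = ⊤} := by
      intro ω hω
      by_contra h
      rcases hiv ω with h' | ⟨m, hm⟩
      · exact h h'
      · apply hω
        rw [hm]
        rw [tsum_eq_single m]
        · simp [Set.indicator_apply, hm]
        · intro n hn
          have hne : ω ∉ {ω' | X ω' = (n : ℝ≥0∞)} := by
            simp only [Set.mem_setOf_eq, hm]
            exact fun hc => hn (Nat.cast_injective hc).symm
          simp [Set.indicator_of_notMem hne]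
    exact measure_mono_null this htop
  rw [lintegral_congr_ae hae, lintegral_tsum (fun n =>
    (measurable_const.indicator (hmeasn n)).aemeasurable)]
  have hterm : ∀ n : ℕ, ∫⁻ ω, ({ω' | X ω' = n}.indicator (fun _ => (n : ℝ≥0∞)) ω) ∂P
      = (n : ℝ≥0∞) * P {ω | X ω = n} := by
    intro n
    rw [lintegral_indicator (hmeasn n), setLIntegral_const]
  simp_rw [hterm, hpmf']
  -- now compute the mean of the Poisson distribution
  have hshift : ∀ n : ℕ, ((n+1 : ℕ) : ℝ≥0∞) *
      ENNReal.ofReal (ProbabilityTheory.poissonPMFReal lam (n+1))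
      = ENNReal.ofReal (lam : ℝ) * ENNReal.ofReal (ProbabilityTheory.poissonPMFReal lam n) := by
    intro n
    rw [← ENNReal.ofReal_natCast (n+1), ← ENNReal.ofReal_mul (by positivity),
      ← ENNReal.ofReal_mul (by exact lam.coe_nonneg)]
    congr 1
    unfold ProbabilityTheory.poissonPMFReal
    have h1 : ((n+1 : ℕ) : ℝ) ≠ 0 := by positivity
    rw [Nat.factorial_succ, pow_succ]
    push_cast
    field_simp
  rw [tsum_eq_zero_add' ENNReal.summable]
  simp only [Nat.cast_zero, zero_mul, zero_add]
  calc ∑' n : ℕ, ((n+1 : ℕ) : ℝ≥0∞) * ENNReal.ofReal (ProbabilityTheory.poissonPMFReal lam (n+1))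
      = ∑' n : ℕ, ENNReal.ofReal (lam : ℝ) *
          ENNReal.ofReal (ProbabilityTheory.poissonPMFReal lam n) := by
        exact tsum_congr hshift
    _ = ENNReal.ofReal (lam : ℝ) := by rw [ENNReal.tsum_mul_left, hone, mul_one]
    _ = (lam : ℝ≥0∞) := by simp [ENNReal.ofReal_coe_nnreal]

lemma poisson_expectation (hη : IsPoissonPP P volume η)
    {A : Set (EuclideanSpace ℝ (Fin d))} (hA : MeasurableSet A) (hfin : volume A ≠ ⊤) :
    ∫⁻ ω, η ω A ∂P = volume A := by
  have h := poisson_exp_aux (P := P) (hη.measurable_count A hA)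
    (fun ω => hη.integer_valued ω A) (lam := (volume A).toNNReal)
    (by
      intro n
      rw [hη.poisson_count A hA hfin n]
      congr 2 <;> simp [ENNReal.coe_toNNReal hfin, ENNReal.toReal])
  rw [h, ENNReal.coe_toNNReal hfin]

lemma poisson_expectation_le (hη : IsPoissonPP P volume η)
    {A : Set (EuclideanSpace ℝ (Fin d))} (hA : MeasurableSet A) :
    ∫⁻ ω, η ω A ∂P ≤ volume A := by
  by_cases h : volume A = ⊤
  · simp [h]
  · exact (poisson_expectation hη hA h).le

lemma measurable_simple_lintegral (hη : IsPoissonPP P volume η)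
    (s : SimpleFunc (EuclideanSpace ℝ (Fin d)) ℝ≥0∞) :
    Measurable fun ω => s.lintegral (η ω) := by
  simp only [SimpleFunc.lintegral]
  exact Finset.measurable_sum _ fun x _ =>
    (hη.measurable_count _ (s.measurableSet_fiber x)).const_mul x

lemma measurable_lintegral_eta (hη : IsPoissonPP P volume η)
    {f : EuclideanSpace ℝ (Fin d) → ℝ≥0∞} (hf : Measurable f) :
    Measurable fun ω => ∫⁻ x, f x ∂(η ω) := by
  have h : (fun ω => ∫⁻ x, f x ∂η ω)
      = fun ω => ⨆ n, (SimpleFunc.eapprox f n).lintegral (η ω) := by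
    funext ω; exact lintegral_eq_iSup_eapprox_lintegral hf
  rw [h]
  exact Measurable.iSup fun n => measurable_simple_lintegral hη _

lemma campbell_le (hη : IsPoissonPP P volume η)
    {f : EuclideanSpace ℝ (Fin d) → ℝ≥0∞} (hf : Measurable f) :
    ∫⁻ ω, (∫⁻ x, f x ∂η ω) ∂P ≤ ∫⁻ x, f x ∂(volume) := by
  have hsimple : ∀ s : SimpleFunc (EuclideanSpace ℝ (Fin d)) ℝ≥0∞,
      ∫⁻ ω, s.lintegral (η ω) ∂P ≤ s.lintegral volume := by
    intro s
    simp only [SimpleFunc.lintegral]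
    rw [lintegral_finset_sum _ (fun x _ =>
      (hη.measurable_count _ (s.measurableSet_fiber x)).const_mul x)]
    refine Finset.sum_le_sum fun x _ => ?_
    rw [lintegral_const_mul _ (hη.measurable_count _ (s.measurableSet_fiber x))]
    exact mul_le_mul_right (poisson_expectation_le hη (s.measurableSet_fiber x)) x
  calc ∫⁻ ω, ∫⁻ x, f x ∂η ω ∂P
      = ∫⁻ ω, ⨆ n, (SimpleFunc.eapprox f n).lintegral (η ω) ∂P := by
        refine lintegral_congr fun ω => lintegral_eq_iSup_eapprox_lintegral hf
    _ = ⨆ n, ∫⁻ ω, (SimpleFunc.eapprox f n).lintegral (η ω) ∂P := by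
        refine lintegral_iSup (fun n => measurable_simple_lintegral hη _)
          (fun n m h ω => SimpleFunc.lintegral_mono (SimpleFunc.monotone_eapprox f h) le_rfl)
    _ ≤ ⨆ n, (SimpleFunc.eapprox f n).lintegral volume := iSup_mono fun n => hsimple _
    _ = ∫⁻ x, f x ∂volume := (lintegral_eq_iSup_eapprox_lintegral hf).symm

lemma ae_lintegral_lt_top (hη : IsPoissonPP P volume η)
    {f : EuclideanSpace ℝ (Fin d) → ℝ≥0∞} (hf : Measurable f)
    (hfin : ∫⁻ x, f x ∂(volume : Measure (EuclideanSpace ℝ (Fin d))) ≠ ⊤) :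
    ∀ᵐ ω ∂P, ∫⁻ x, f x ∂(η ω) < ⊤ := by
  refine ae_lt_top (measurable_lintegral_eta hη hf) ?_
  exact ((campbell_le hη hf).trans_lt (lt_top_iff_ne_top.2 hfin)).ne


open Set Metric in
lemma lintegral_norm_polar {d : ℕ} (hd : 1 ≤ d) (g : ℝ → ℝ≥0∞) (hg : Measurable g) :
    ∫⁻ x, g ‖x‖ ∂(volume : Measure (EuclideanSpace ℝ (Fin d))) =
      (volume : Measure (EuclideanSpace ℝ (Fin d))).toSphere Set.univ *
        ∫⁻ y in Set.Ioi (0:ℝ), ENNReal.ofReal (y ^ (d-1)) * g y := by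
  set E := EuclideanSpace ℝ (Fin d)
  set μ : Measure E := volume
  have hdim : Module.finrank ℝ E = d := finrank_euclideanSpace_fin
  haveI : Nontrivial E := by
    have h0 : 0 < Module.finrank ℝ E := by omega
    exact Module.nontrivial_of_finrank_pos h0
  have hmp := μ.measurePreserving_homeomorphUnitSphereProd
  rw [hdim] at hmp
  have hmeasF : Measurable fun z : sphere (0:E) 1 × Set.Ioi (0:ℝ) => g z.2 :=
    hg.comp (measurable_subtype_coe.comp measurable_snd)
  calc ∫⁻ x, g ‖x‖ ∂μ
      = ∫⁻ x in ({(0:E)}ᶜ : Set E), g ‖x‖ ∂μ := by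
        rw [restrict_compl_singleton]
    _ = ∫⁻ x : ({(0:E)}ᶜ : Set E), g ‖(x:E)‖ ∂(μ.comap (↑)) :=
        (lintegral_subtype_comap (measurableSet_singleton _).compl _).symm
    _ = ∫⁻ z : sphere (0:E) 1 × Set.Ioi (0:ℝ), g z.2
          ∂(μ.toSphere.prod (Measure.volumeIoiPow (d - 1))) := by
        rw [← hmp.lintegral_comp hmeasF]
        exact lintegral_congr fun x => by
          rw [homeomorphUnitSphereProd_apply_snd_coe]
    _ = μ.toSphere Set.univ * ∫⁻ y : Set.Ioi (0:ℝ), g y ∂(Measure.volumeIoiPow (d-1)) := by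
        rw [lintegral_prod _ hmeasF.aemeasurable]
        simp [lintegral_const, mul_comm]
    _ = μ.toSphere Set.univ * ∫⁻ y in Set.Ioi (0:ℝ), ENNReal.ofReal (y ^ (d-1)) * g y := by
        congr 1
        have hfun : Measurable fun y : Set.Ioi (0:ℝ) => g ↑y :=
          hg.comp measurable_subtype_coe
        have hdens : Measurable fun r : Set.Ioi (0:ℝ) => ENNReal.ofReal ((r:ℝ) ^ (d-1)) :=
          (measurable_subtype_coe.pow_const _).ennreal_ofReal
        rw [Measure.volumeIoiPow, lintegral_withDensity_eq_lintegral_mul _ hdens hfun,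
          ← lintegral_subtype_comap measurableSet_Ioi
            (fun y => ENNReal.ofReal (y ^ (d-1)) * g y)]
        exact lintegral_congr fun y => rfl

open Set Metric in
lemma oneD_bound (hd : 1 ≤ d) {l : ℝ → ℝ} (hcont : ContinuousOn l (Set.Ici 0))
    (hmono : AntitoneOn l (Set.Ici 0)) (hpos : ∀ r, 0 ≤ r → 0 < l r)
    (hint : IntegrableOn (fun r => r ^ (d - 1) * l r) (Set.Ioi 0))
    {R : ℝ} (hR : 0 ≤ R) :
    ∫⁻ y in Set.Ioi (0:ℝ), ENNReal.ofReal (y ^ (d-1)) *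
      ENNReal.ofReal (l (max (y - R) 0)) < ⊤ := by
  have hl0 : ∀ x : ℝ, 0 ≤ x → l x ≤ l 0 :=
    fun x hx => hmono Set.self_mem_Ici hx hx
  have hsplit : Set.Ioc (0:ℝ) (R+1) ∪ Set.Ioi (R+1) = Set.Ioi 0 :=
    Set.Ioc_union_Ioi_eq_Ioi (by linarith)
  rw [← hsplit, lintegral_union measurableSet_Ioi
    (Set.Ioc_disjoint_Ioi le_rfl)]
  have hA : ∫⁻ y in Set.Ioc (0:ℝ) (R+1), ENNReal.ofReal (y ^ (d-1)) *
      ENNReal.ofReal (l (max (y - R) 0)) < ⊤ := by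
    have hbd : ∀ y ∈ Set.Ioc (0:ℝ) (R+1),
        ENNReal.ofReal (y ^ (d-1)) * ENNReal.ofReal (l (max (y - R) 0)) ≤
          ENNReal.ofReal ((R+1) ^ (d-1)) * ENNReal.ofReal (l 0) := by
      intro y hy
      refine mul_le_mul' (ENNReal.ofReal_le_ofReal ?_) (ENNReal.ofReal_le_ofReal ?_)
      · exact pow_le_pow_left₀ hy.1.le hy.2 _
      · exact hl0 _ (le_max_right _ _)
    calc ∫⁻ y in Set.Ioc (0:ℝ) (R+1), ENNReal.ofReal (y ^ (d-1)) *
          ENNReal.ofReal (l (max (y - R) 0))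
        ≤ ∫⁻ _ in Set.Ioc (0:ℝ) (R+1),
            ENNReal.ofReal ((R+1) ^ (d-1)) * ENNReal.ofReal (l 0) :=
          setLIntegral_mono measurable_const hbd
      _ = ENNReal.ofReal ((R+1) ^ (d-1)) * ENNReal.ofReal (l 0) *
            volume (Set.Ioc (0:ℝ) (R+1)) := setLIntegral_const _ _
      _ < ⊤ := by
          rw [Real.volume_Ioc]
          exact ENNReal.mul_lt_top (ENNReal.mul_lt_top ENNReal.ofReal_lt_top
            ENNReal.ofReal_lt_top) ENNReal.ofReal_lt_top
  have hB : ∫⁻ y in Set.Ioi (R+1), ENNReal.ofReal (y ^ (d-1)) *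
      ENNReal.ofReal (l (max (y - R) 0)) < ⊤ := by
    set F : ℝ → ℝ≥0∞ := fun y => (Set.Ioi (R+1)).indicator
      (fun y => ENNReal.ofReal (y ^ (d-1)) * ENNReal.ofReal (l (max (y - R) 0))) y with hF
    have h1 : ∫⁻ y in Set.Ioi (R+1), ENNReal.ofReal (y ^ (d-1)) *
        ENNReal.ofReal (l (max (y - R) 0)) = ∫⁻ y, F y := by
      rw [hF, lintegral_indicator measurableSet_Ioi]
    have h2 : ∫⁻ y, F y = ∫⁻ s, F (s + R) := (lintegral_add_right_eq_self F R).symm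
    have h3 : ∀ s : ℝ, F (s + R) ≤ ENNReal.ofReal ((R+1) ^ (d-1)) *
        (Set.Ioi (1:ℝ)).indicator (fun s => ENNReal.ofReal (s ^ (d-1) * l s)) s := by
      intro s
      by_cases hs : s ∈ Set.Ioi (1:ℝ)
      · have hs1 : (1:ℝ) < s := hs
        have hmem : s + R ∈ Set.Ioi (R+1) := by simp only [Set.mem_Ioi]; linarith
        simp only [hF, Set.indicator_of_mem hmem, Set.indicator_of_mem hs]
        have hmax : max (s + R - R) 0 = s := by
          rw [add_sub_cancel_right, max_eq_left (by linarith)]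
        rw [hmax]
        have hpow : (s + R) ^ (d-1) ≤ (R+1) ^ (d-1) * s ^ (d-1) := by
          rw [← mul_pow]
          refine pow_le_pow_left₀ (by linarith) (by nlinarith) _
        calc ENNReal.ofReal ((s + R) ^ (d-1)) * ENNReal.ofReal (l s)
            ≤ ENNReal.ofReal ((R+1) ^ (d-1) * s ^ (d-1)) * ENNReal.ofReal (l s) :=
              mul_le_mul' (ENNReal.ofReal_le_ofReal hpow) le_rfl
          _ = ENNReal.ofReal ((R+1) ^ (d-1)) * ENNReal.ofReal (s ^ (d-1) * l s) := by
              rw [← ENNReal.ofReal_mul (by positivity), ← ENNReal.ofReal_mul (by positivity),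
                mul_assoc]
      · have hnot : s + R ∉ Set.Ioi (R+1) := by
          simp only [Set.mem_Ioi] at hs ⊢
          intro hc; exact hs (by linarith)
        simp only [hF, Set.indicator_of_notMem hnot]
        exact bot_le
    have h4 : ∫⁻ s, F (s + R) ≤ ENNReal.ofReal ((R+1) ^ (d-1)) *
        ∫⁻ s, (Set.Ioi (1:ℝ)).indicator (fun s => ENNReal.ofReal (s ^ (d-1) * l s)) s := by
      rw [← lintegral_const_mul' _ _ ENNReal.ofReal_ne_top]
      exact lintegral_mono h3
    have h5 : ∫⁻ s, (Set.Ioi (1:ℝ)).indicator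
        (fun s => ENNReal.ofReal (s ^ (d-1) * l s)) s < ⊤ := by
      rw [lintegral_indicator measurableSet_Ioi]
      refine lt_of_le_of_lt (lintegral_mono_set (Set.Ioi_subset_Ioi (by norm_num : (0:ℝ) ≤ 1))) ?_
      exact hint.lintegral_lt_top
    rw [h1, h2]
    exact lt_of_le_of_lt h4 (ENNReal.mul_lt_top ENNReal.ofReal_lt_top h5)
  exact ENNReal.add_lt_top.2 ⟨hA, hB⟩

end FieldAux

/-- If l : [0,∞) → (0,∞) is continuous, non-increasing (hence bounded by l(0)), with
∫₀^∞ r^{d−1} l(r) dr < ∞, and η is a unit-intensity Poisson process on ℝ^d, then the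
random field Ψ(y) = Σ_{x∈η} l(|x−y|) is almost surely continuous on ℝ^d. -/
theorem field_ae_continuous {d : ℕ} (hd : 1 ≤ d) {Ω : Type*} [MeasurableSpace Ω]
    (P : Measure Ω) [IsProbabilityMeasure P]
    (η : Ω → Measure (EuclideanSpace ℝ (Fin d)))
    (hη : IsPoissonPP P (volume : Measure (EuclideanSpace ℝ (Fin d))) η)
    (l : ℝ → ℝ) (hcont : ContinuousOn l (Set.Ici 0))
    (hmono : AntitoneOn l (Set.Ici 0)) (hpos : ∀ r, 0 ≤ r → 0 < l r)
    (hint : IntegrableOn (fun r => r ^ (d - 1) * l r) (Set.Ioi 0)) :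
    ∀ᵐ ω ∂P, Continuous fun y : EuclideanSpace ℝ (Fin d) =>
      (∫⁻ x, ENNReal.ofReal (l ‖x - y‖) ∂(η ω)).toReal := by
  classical
  have hlc : ∀ R : ℕ, Continuous fun y : ℝ => l (max (y - R) 0) := fun R =>
    hcont.comp_continuous ((continuous_id.sub continuous_const).max continuous_const)
      (fun y => Set.mem_Ici.2 (le_max_right _ _))
  set g : ℕ → EuclideanSpace ℝ (Fin d) → ℝ≥0∞ :=
    fun R x => ENNReal.ofReal (l (max (‖x‖ - R) 0)) with hgdef
  have hgmeas : ∀ R : ℕ, Measurable (g R) := fun R =>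
    ((hlc R).comp continuous_norm).measurable.ennreal_ofReal
  have hgfin : ∀ R : ℕ, ∫⁻ x, g R x ∂(volume : Measure (EuclideanSpace ℝ (Fin d))) < ⊤ := by
    intro R
    have heq : ∫⁻ x, g R x ∂(volume : Measure (EuclideanSpace ℝ (Fin d))) =
        ∫⁻ x, (fun y : ℝ => ENNReal.ofReal (l (max (y - R) 0))) ‖x‖
          ∂(volume : Measure (EuclideanSpace ℝ (Fin d))) := rfl
    rw [heq, lintegral_norm_polar hd _ ((hlc R).measurable.ennreal_ofReal)]
    exact ENNReal.mul_lt_top (measure_lt_top _ _)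
      (oneD_bound hd hcont hmono hpos hint (Nat.cast_nonneg R))
  have hae : ∀ᵐ ω ∂P, ∀ R : ℕ, ∫⁻ x, g R x ∂(η ω) < ⊤ := by
    rw [ae_all_iff]
    intro R
    exact ae_lintegral_lt_top hη (hgmeas R) (hgfin R).ne
  filter_upwards [hae] with ω hω
  rw [continuous_iff_continuousAt]
  intro y₀
  obtain ⟨R, hR⟩ := exists_nat_ge (‖y₀‖ + 1)
  have hbound : ∀ y : EuclideanSpace ℝ (Fin d), ‖y‖ ≤ R →
      ∀ x, ENNReal.ofReal (l ‖x - y‖) ≤ g R x := by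
    intro y hy x
    refine ENNReal.ofReal_le_ofReal ?_
    refine hmono (Set.mem_Ici.2 (le_max_right _ _)) (Set.mem_Ici.2 (norm_nonneg _)) ?_
    refine max_le ?_ (norm_nonneg _)
    have h1 := norm_sub_norm_le x y
    linarith
  have hmeasI : ∀ y : EuclideanSpace ℝ (Fin d),
      Measurable fun x : EuclideanSpace ℝ (Fin d) => ENNReal.ofReal (l ‖x - y‖) := by
    intro y
    have hc : Continuous fun x : EuclideanSpace ℝ (Fin d) => l ‖x - y‖ :=
      hcont.comp_continuous (continuous_id.sub continuous_const).norm
        (fun x => Set.mem_Ici.2 (norm_nonneg _))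
    exact hc.measurable.ennreal_ofReal
  have htend : Filter.Tendsto (fun y => ∫⁻ x, ENNReal.ofReal (l ‖x - y‖) ∂(η ω)) (nhds y₀)
      (nhds (∫⁻ x, ENNReal.ofReal (l ‖x - y₀‖) ∂(η ω))) := by
    refine tendsto_lintegral_filter_of_dominated_convergence (g R)
      (Filter.Eventually.of_forall fun y => hmeasI y) ?_ (hω R).ne ?_
    · have hball : Metric.ball y₀ 1 ∈ nhds y₀ := Metric.ball_mem_nhds _ one_pos
      refine Filter.eventually_of_mem hball fun y hy => ae_of_all _ fun x => ?_
      refine hbound y ?_ x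
      have hlt : ‖y - y₀‖ < 1 := by
        simpa [dist_eq_norm] using hy
      have h2 := norm_sub_norm_le y y₀
      linarith
    · refine ae_of_all _ fun x => ?_
      have hc : Continuous fun y : EuclideanSpace ℝ (Fin d) =>
          ENNReal.ofReal (l ‖x - y‖) := by
        refine ENNReal.continuous_ofReal.comp ?_
        exact hcont.comp_continuous (continuous_const.sub continuous_id).norm
          (fun y => Set.mem_Ici.2 (norm_nonneg _))
      exact hc.continuousAt
  have hfin0 : ∫⁻ x, ENNReal.ofReal (l ‖x - y₀‖) ∂(η ω) ≠ ⊤ :=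
    ((lintegral_mono fun x => hbound y₀ (by linarith) x).trans_lt (hω R)).ne
  exact (ENNReal.tendsto_toReal hfin0).comp htend
end
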